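/- Suppose the neutral replacement rule replaces at most one individual per time step, i.e., p°_{(R,α)} = 0 whenever |R| ≥ 2. Then for pairwise distinct sites i, j, k, φ_ijk = u·(1/n)·φ_jk·Σ_{(R,α) : {i,j,k}∩R = {i}} p°_{(R,α)} + u·(1/n)·φ_ik·Σ_{(R,α) : {i,j,k}∩R = {j}} p°_{(R,α)} + u·(1/n)·φ_ij·Σ_{(R,α) : {i,j,k}∩R = {k}} p°_{(R,α)} + φ_ijk·Σ_{(R,α) : |{i,j,k}∩R| = 0} p°_{(R,α)} + (1−u)·Σ_{(R,α) : |{i,j,k}∩R| = 1} p°_{(R,α)}·φ_{α̃(i)α̃(j)α̃(k)}. -/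

import Mathlib

open Finset

namespace SCT

abbrev Event (N : ℕ) := Finset (Fin N) × (Fin N → Fin N)

/-- The extension `α̃` of the parentage map of a replacement event:
it equals `α` on `R` and the identity off `R`. -/
def extMap {N : ℕ} (E : Event N) : Fin N → Fin N :=
  fun i => if i ∈ E.1 then E.2 i else i

/-- Transition probabilities of the mutation–selection Markov chain on states
`Fin N → Fin n`, for a replacement rule `p` and mutation probability `u`. -/
noncomputable def transMat (N n : ℕ) (p : Event N → ℝ) (u : ℝ)
    (x y : Fin N → Fin n) : ℝ :=
  ∑ E : Event N, p E *
    (∏ i ∈ E.1, ((1 - u) * (if y i = x (E.2 i) then (1:ℝ) else 0) + u / (n:ℝ))) *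
    (∏ i ∈ E.1ᶜ, (if y i = x i then (1:ℝ) else 0))

def IsDist {α : Type*} [Fintype α] (q : α → ℝ) : Prop :=
  (∀ a, 0 ≤ q a) ∧ ∑ a, q a = 1

def IsStationary {N n : ℕ} (P : (Fin N → Fin n) → (Fin N → Fin n) → ℝ)
    (π : (Fin N → Fin n) → ℝ) : Prop :=
  IsDist π ∧ ∀ y, ∑ x, π x * P x y = π y

/-- Fixation axiom: some site `i` can propagate its lineage through the whole
population via finitely many replacement events of positive probability. -/
def FixationAxiom {N : ℕ} (p : Event N → ℝ) : Prop :=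
  ∃ (i : Fin N) (m : ℕ) (E : Fin m → Event N), 1 ≤ m ∧
    (∀ k, 0 < p (E k)) ∧ (∃ k, i ∈ (E k).1) ∧
    ∀ j, ((List.ofFn (fun k => extMap (E k))).foldr (· ∘ ·) id) j = i

/-- Pairwise identity-by-state probability under the distribution `π`. -/
noncomputable def phi2 {N n : ℕ} (π : (Fin N → Fin n) → ℝ) (i j : Fin N) : ℝ :=
  ∑ x, π x * (if x i = x j then (1:ℝ) else 0)

/-- Triple identity-by-state probability under the distribution `π`. -/
noncomputable def phi3 {N n : ℕ} (π : (Fin N → Fin n) → ℝ) (i j k : Fin N) : ℝ :=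
  ∑ x, π x * (if x i = x j ∧ x j = x k then (1:ℝ) else 0)

-- indicator product lemma
lemma prod_compl_indicator {N n : ℕ} (x y : Fin N → Fin n) (r : Fin N) :
    (∏ l ∈ ({r} : Finset (Fin N))ᶜ, (if y l = x l then (1:ℝ) else 0))
      = ∑ c : Fin n, (if y = Function.update x r c then (1:ℝ) else 0) := by
  rw [Finset.prod_boole]
  by_cases h : ∀ l ∈ ({r} : Finset (Fin N))ᶜ, y l = x l
  · rw [if_pos h]
    have he : ∀ c : Fin n, (y = Function.update x r c) ↔ (c = y r) := by
      intro c
      constructor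
      · intro hc; rw [hc]; simp
      · intro hc; funext l
        by_cases hl : l = r
        · subst hl; simp [hc]
        · rw [Function.update_of_ne hl]
          exact h l (by simpa using hl)
    simp only [he]
    simp
  · rw [if_neg h]
    push_neg at h
    obtain ⟨l, hl, hyl⟩ := h
    have hlr : l ≠ r := by simpa using hl
    symm
    apply Finset.sum_eq_zero
    intro c _
    rw [if_neg]
    intro hc
    apply hyl
    rw [hc, Function.update_of_ne hlr]

lemma sum_single {N n : ℕ} (x : Fin N → Fin n) (r : Fin N) (g : Fin n → ℝ)
    (F : (Fin N → Fin n) → ℝ) :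
    ∑ y : Fin N → Fin n,
      g (y r) * (∏ l ∈ ({r} : Finset (Fin N))ᶜ, (if y l = x l then (1:ℝ) else 0)) * F y
      = ∑ c, g c * F (Function.update x r c) := by
  have : ∀ y : Fin N → Fin n,
      g (y r) * (∏ l ∈ ({r} : Finset (Fin N))ᶜ, (if y l = x l then (1:ℝ) else 0)) * F y
      = ∑ c, (if y = Function.update x r c then (1:ℝ) else 0) * (g c * F y) := by
    intro y
    rw [prod_compl_indicator, Finset.mul_sum, Finset.sum_mul]
    refine Finset.sum_congr rfl (fun c _ => ?_)
    by_cases h : y = Function.update x r c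
    · have : y r = c := by rw [h]; simp
      simp [h, this, mul_comm]
    · simp [h]
  simp only [this]
  rw [Finset.sum_comm]
  refine Finset.sum_congr rfl (fun c _ => ?_)
  simp only [ite_mul, one_mul, zero_mul]
  rw [Finset.sum_ite_eq' (Finset.univ) (Function.update x r c)]
  simp

lemma sum_empty' {N n : ℕ} (x : Fin N → Fin n) (F : (Fin N → Fin n) → ℝ) :
    ∑ y : Fin N → Fin n, (∏ l : Fin N, (if y l = x l then (1:ℝ) else 0)) * F y = F x := by
  have : ∀ y : Fin N → Fin n, (∏ l : Fin N, (if y l = x l then (1:ℝ) else 0))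
      = if y = x then (1:ℝ) else 0 := by
    intro y
    rw [Finset.prod_boole]
    simp [funext_iff]
  simp only [this]
  simp only [ite_mul, one_mul, zero_mul]
  rw [Finset.sum_ite_eq' (Finset.univ) x]
  simp

lemma triple_swap {α β γ : Type*} [Fintype α] [Fintype β] [Fintype γ] (f : α → β → γ → ℝ) :
    ∑ a, ∑ b, ∑ c, f a b c = ∑ c, ∑ b, ∑ a, f a b c :=
  calc ∑ a, ∑ b, ∑ c, f a b c
      = ∑ b, ∑ a, ∑ c, f a b c := Finset.sum_comm
    _ = ∑ b, ∑ c, ∑ a, f a b c := Finset.sum_congr rfl (fun b _ => Finset.sum_comm)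
    _ = ∑ c, ∑ b, ∑ a, f a b c := Finset.sum_comm

lemma stepA {N n : ℕ} (p : Event N → ℝ) (u : ℝ) (π : (Fin N → Fin n) → ℝ)
    (hπ : ∀ y, ∑ x, π x * transMat N n p u x y = π y) (i j k : Fin N) :
    (∑ x, π x * (if x i = x j ∧ x j = x k then (1:ℝ) else 0))
      = ∑ E : Event N, p E * ∑ x, π x *
        (∑ y : Fin N → Fin n,
          (∏ l ∈ E.1, ((1 - u) * (if y l = x (E.2 l) then (1:ℝ) else 0) + u / (n:ℝ))) *
          (∏ l ∈ E.1ᶜ, (if y l = x l then (1:ℝ) else 0)) *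
          (if y i = y j ∧ y j = y k then (1:ℝ) else 0)) := by
  have h1 : (∑ x, π x * (if x i = x j ∧ x j = x k then (1:ℝ) else 0))
      = ∑ y : Fin N → Fin n, (∑ x, π x * transMat N n p u x y) *
          (if y i = y j ∧ y j = y k then (1:ℝ) else 0) := by
    refine Finset.sum_congr rfl (fun y _ => ?_)
    rw [hπ y]
  rw [h1]
  simp only [transMat, Finset.sum_mul, Finset.mul_sum]
  rw [triple_swap]
  refine Finset.sum_congr rfl (fun E _ => ?_)
  refine Finset.sum_congr rfl (fun x _ => ?_)
  refine Finset.sum_congr rfl (fun y _ => ?_)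
  ring

noncomputable def Tfun {N : ℕ} (n : ℕ) (u : ℝ) (i j k : Fin N) (E : Event N)
    (x : Fin N → Fin n) : ℝ :=
  ∑ y : Fin N → Fin n,
    (∏ l ∈ E.1, ((1 - u) * (if y l = x (E.2 l) then (1:ℝ) else 0) + u / (n:ℝ))) *
    (∏ l ∈ E.1ᶜ, (if y l = x l then (1:ℝ) else 0)) *
    (if y i = y j ∧ y j = y k then (1:ℝ) else 0)

lemma T_empty {N n : ℕ} (u : ℝ) (i j k : Fin N) (E : Event N) (hE : E.1 = ∅)
    (x : Fin N → Fin n) :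
    Tfun n u i j k E x = (if x i = x j ∧ x j = x k then (1:ℝ) else 0) := by
  unfold Tfun
  simp only [hE, Finset.prod_empty, one_mul, Finset.compl_empty]
  exact sum_empty' x (fun y => (if y i = y j ∧ y j = y k then (1:ℝ) else 0))

lemma T_one {N n : ℕ} (u : ℝ) (i j k : Fin N) (E : Event N) (r : Fin N)
    (hE : E.1 = {r}) (x : Fin N → Fin n) :
    Tfun n u i j k E x = ∑ c : Fin n,
      ((1 - u) * (if c = x (E.2 r) then (1:ℝ) else 0) + u / (n:ℝ)) *
      (if Function.update x r c i = Function.update x r c j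
          ∧ Function.update x r c j = Function.update x r c k then (1:ℝ) else 0) := by
  unfold Tfun
  simp only [hE, Finset.prod_singleton]
  have := sum_single x r (fun c => (1 - u) * (if c = x (E.2 r) then (1:ℝ) else 0) + u / (n:ℝ))
    (fun y => (if y i = y j ∧ y j = y k then (1:ℝ) else 0))
  exact this

lemma T_at_i {N n : ℕ} (u : ℝ) (i j k : Fin N) (hij : i ≠ j) (hik : i ≠ k)
    (E : Event N) (hE : E.1 = {i}) (x : Fin N → Fin n) :
    Tfun n u i j k E x
      = u / (n:ℝ) * (if x j = x k then (1:ℝ) else 0)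
        + (1 - u) * (if x (E.2 i) = x j ∧ x j = x k then (1:ℝ) else 0) := by
  rw [T_one u i j k E i hE x]
  simp only [Function.update_self, Function.update_of_ne hij.symm,
    Function.update_of_ne hik.symm]
  by_cases h1 : x j = x k
  · have hterm : ∀ c : Fin n,
        ((1 - u) * (if c = x (E.2 i) then (1:ℝ) else 0) + u / (n:ℝ)) *
          (if c = x j ∧ x j = x k then (1:ℝ) else 0)
        = if c = x j then ((1 - u) * (if c = x (E.2 i) then (1:ℝ) else 0) + u / (n:ℝ)) else 0 := by
      intro c; by_cases hc : c = x j <;> simp [hc, h1]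
    rw [Finset.sum_congr rfl (fun c _ => hterm c), Finset.sum_ite_eq' Finset.univ (x j)]
    by_cases h2 : x j = x (E.2 i) <;> simp [h1, h2, eq_comm] <;> ring
  · have hterm : ∀ c : Fin n,
        ((1 - u) * (if c = x (E.2 i) then (1:ℝ) else 0) + u / (n:ℝ)) *
          (if c = x j ∧ x j = x k then (1:ℝ) else 0) = 0 := by
      intro c; simp [h1]
    rw [Finset.sum_congr rfl (fun c _ => hterm c)]
    simp [h1]

lemma T_at_j {N n : ℕ} (u : ℝ) (i j k : Fin N) (hij : i ≠ j) (hjk : j ≠ k)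
    (E : Event N) (hE : E.1 = {j}) (x : Fin N → Fin n) :
    Tfun n u i j k E x
      = u / (n:ℝ) * (if x i = x k then (1:ℝ) else 0)
        + (1 - u) * (if x i = x (E.2 j) ∧ x (E.2 j) = x k then (1:ℝ) else 0) := by
  rw [T_one u i j k E j hE x]
  simp only [Function.update_self, Function.update_of_ne hij,
    Function.update_of_ne hjk.symm]
  by_cases h1 : x i = x k
  · have hterm : ∀ c : Fin n,
        ((1 - u) * (if c = x (E.2 j) then (1:ℝ) else 0) + u / (n:ℝ)) *
          (if x i = c ∧ c = x k then (1:ℝ) else 0)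
        = if c = x i then ((1 - u) * (if c = x (E.2 j) then (1:ℝ) else 0) + u / (n:ℝ)) else 0 := by
      intro c; by_cases hc : c = x i <;> simp [hc, ← h1, eq_comm]
    rw [Finset.sum_congr rfl (fun c _ => hterm c), Finset.sum_ite_eq' Finset.univ (x i)]
    by_cases h2 : x i = x (E.2 j)
    · have h3 : x (E.2 j) = x k := h2 ▸ h1
      simp [h1, h2, h3, eq_comm]; ring
    · simp [h1, h2, eq_comm]
      ring
  · have hterm : ∀ c : Fin n,
        ((1 - u) * (if c = x (E.2 j) then (1:ℝ) else 0) + u / (n:ℝ)) *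
          (if x i = c ∧ c = x k then (1:ℝ) else 0) = 0 := by
      intro c
      by_cases hc : x i = c ∧ c = x k
      · exact absurd (hc.1.trans hc.2) h1
      · simp [hc]
    rw [Finset.sum_congr rfl (fun c _ => hterm c)]
    have h2 : ¬ (x i = x (E.2 j) ∧ x (E.2 j) = x k) := fun h => h1 (h.1.trans h.2)
    simp [h1, h2]

lemma T_at_k {N n : ℕ} (u : ℝ) (i j k : Fin N) (hik : i ≠ k) (hjk : j ≠ k)
    (E : Event N) (hE : E.1 = {k}) (x : Fin N → Fin n) :
    Tfun n u i j k E x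
      = u / (n:ℝ) * (if x i = x j then (1:ℝ) else 0)
        + (1 - u) * (if x i = x j ∧ x j = x (E.2 k) then (1:ℝ) else 0) := by
  rw [T_one u i j k E k hE x]
  simp only [Function.update_self, Function.update_of_ne hik,
    Function.update_of_ne hjk]
  by_cases h1 : x i = x j
  · have hterm : ∀ c : Fin n,
        ((1 - u) * (if c = x (E.2 k) then (1:ℝ) else 0) + u / (n:ℝ)) *
          (if x i = x j ∧ x j = c then (1:ℝ) else 0)
        = if c = x j then ((1 - u) * (if c = x (E.2 k) then (1:ℝ) else 0) + u / (n:ℝ)) else 0 := by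
      intro c; by_cases hc : c = x j <;> simp [hc, h1, eq_comm]
    rw [Finset.sum_congr rfl (fun c _ => hterm c), Finset.sum_ite_eq' Finset.univ (x j)]
    by_cases h2 : x j = x (E.2 k) <;> simp [h1, h2, eq_comm] <;> ring
  · have hterm : ∀ c : Fin n,
        ((1 - u) * (if c = x (E.2 k) then (1:ℝ) else 0) + u / (n:ℝ)) *
          (if x i = x j ∧ x j = c then (1:ℝ) else 0) = 0 := by
      intro c; simp [h1]
    rw [Finset.sum_congr rfl (fun c _ => hterm c)]
    simp [h1]

lemma T_off {N n : ℕ} (hn : 1 ≤ n) (u : ℝ) (i j k : Fin N) (r : Fin N)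
    (hri : r ≠ i) (hrj : r ≠ j) (hrk : r ≠ k)
    (E : Event N) (hE : E.1 = {r}) (x : Fin N → Fin n) :
    Tfun n u i j k E x = (if x i = x j ∧ x j = x k then (1:ℝ) else 0) := by
  rw [T_one u i j k E r hE x]
  simp only [Function.update_of_ne hri.symm, Function.update_of_ne hrj.symm,
    Function.update_of_ne hrk.symm]
  rw [← Finset.sum_mul]
  have hsum : ∑ c : Fin n, ((1 - u) * (if c = x (E.2 r) then (1:ℝ) else 0) + u / (n:ℝ)) = 1 := by
    rw [Finset.sum_add_distrib, ← Finset.mul_sum]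
    have h1 : ∑ c : Fin n, (if c = x (E.2 r) then (1:ℝ) else 0) = 1 := by
      rw [Finset.sum_ite_eq' Finset.univ (x (E.2 r))]; simp
    have hn' : (n:ℝ) ≠ 0 := by positivity
    rw [h1, Finset.sum_const, Finset.card_univ, Fintype.card_fin]
    have hnu : (n:ℝ) * (u / (n:ℝ)) = u := by field_simp
    rw [nsmul_eq_mul, hnu]; ring
  rw [hsum, one_mul]

lemma split2 {X : Type*} [Fintype X] (π f g : X → ℝ) (a b : ℝ) :
    ∑ x, π x * (a * f x + b * g x) = a * (∑ x, π x * f x) + b * (∑ x, π x * g x) := by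
  rw [Finset.mul_sum, Finset.mul_sum, ← Finset.sum_add_distrib]
  exact Finset.sum_congr rfl fun x _ => by ring

/-- If at most one individual is replaced per time step, the triple
identity-by-state probabilities satisfy the simplified recurrence. -/
theorem stmt5 {N n : ℕ} (hN : 1 ≤ N) (hn : 1 ≤ n)
    (p : Event N → ℝ) (hp : IsDist p) (hfix : FixationAxiom p)
    (hsingle : ∀ E : Event N, 2 ≤ E.1.card → p E = 0)
    (u : ℝ) (hu0 : 0 < u) (hu1 : u ≤ 1)
    (π : (Fin N → Fin n) → ℝ)
    (hπ : IsStationary (transMat N n p u) π)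
    (huniq : ∀ π', IsStationary (transMat N n p u) π' → π' = π)
    (i j k : Fin N) (hij : i ≠ j) (hik : i ≠ k) (hjk : j ≠ k) :
    phi3 π i j k =
      u * (1/(n:ℝ)) * phi2 π j k *
        (∑ E ∈ univ.filter
          (fun E : Event N => ({i, j, k} : Finset (Fin N)) ∩ E.1 = {i}), p E)
      + u * (1/(n:ℝ)) * phi2 π i k *
        (∑ E ∈ univ.filter
          (fun E : Event N => ({i, j, k} : Finset (Fin N)) ∩ E.1 = {j}), p E)
      + u * (1/(n:ℝ)) * phi2 π i j *
        (∑ E ∈ univ.filter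
          (fun E : Event N => ({i, j, k} : Finset (Fin N)) ∩ E.1 = {k}), p E)
      + phi3 π i j k *
        (∑ E ∈ univ.filter
          (fun E : Event N => (({i, j, k} : Finset (Fin N)) ∩ E.1).card = 0), p E)
      + (1-u) *
        (∑ E ∈ univ.filter
          (fun E : Event N => (({i, j, k} : Finset (Fin N)) ∩ E.1).card = 1),
            p E * phi3 π (extMap E i) (extMap E j) (extMap E k)) := by
  classical
  have hA : phi3 π i j k = ∑ E : Event N, p E * ∑ x, π x * Tfun n u i j k E x := by
    unfold phi3 Tfun
    exact stepA p u π hπ.2 i j k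
  have key : ∀ E : Event N, p E * (∑ x, π x * Tfun n u i j k E x)
      = u * (1/(n:ℝ)) * phi2 π j k *
          (if ({i, j, k} : Finset (Fin N)) ∩ E.1 = {i} then p E else 0)
      + u * (1/(n:ℝ)) * phi2 π i k *
          (if ({i, j, k} : Finset (Fin N)) ∩ E.1 = {j} then p E else 0)
      + u * (1/(n:ℝ)) * phi2 π i j *
          (if ({i, j, k} : Finset (Fin N)) ∩ E.1 = {k} then p E else 0)
      + phi3 π i j k *
          (if (({i, j, k} : Finset (Fin N)) ∩ E.1).card = 0 then p E else 0)
      + (1-u) * (if (({i, j, k} : Finset (Fin N)) ∩ E.1).card = 1 then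
          p E * phi3 π (extMap E i) (extMap E j) (extMap E k) else 0) := by
    intro E
    by_cases hp0 : p E = 0
    · simp [hp0]
    · have hcard : E.1.card ≤ 1 := by
        by_contra h
        exact hp0 (hsingle E (by omega))
      rcases Nat.le_one_iff_eq_zero_or_eq_one.mp hcard with h0 | h1
      · rw [Finset.card_eq_zero] at h0
        have hsum : (∑ x, π x * Tfun n u i j k E x) = phi3 π i j k := by
          unfold phi3
          exact Finset.sum_congr rfl fun x _ => by rw [T_empty u i j k E h0 x]
        have hint : ({i, j, k} : Finset (Fin N)) ∩ E.1 = ∅ := by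
          rw [h0, Finset.inter_empty]
        rw [hsum, hint]
        simp [(Finset.singleton_ne_empty i).symm, (Finset.singleton_ne_empty j).symm,
          (Finset.singleton_ne_empty k).symm]
        ring
      · obtain ⟨r, hr⟩ := Finset.card_eq_one.mp h1
        by_cases hri : r = i
        · subst hri
          have hint : ({r, j, k} : Finset (Fin N)) ∩ E.1 = {r} := by
            rw [hr]; exact Finset.inter_singleton_of_mem (by simp)
          have hsum : (∑ x, π x * Tfun n u r j k E x)
              = u / (n:ℝ) * phi2 π j k + (1-u) * phi3 π (E.2 r) j k := by
            calc ∑ x, π x * Tfun n u r j k E x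
                = ∑ x, π x * (u / (n:ℝ) * (if x j = x k then (1:ℝ) else 0)
                    + (1-u) * (if x (E.2 r) = x j ∧ x j = x k then (1:ℝ) else 0)) :=
                  Finset.sum_congr rfl fun x _ => by rw [T_at_i u r j k hij hik E hr x]
              _ = u / (n:ℝ) * phi2 π j k + (1-u) * phi3 π (E.2 r) j k := by
                  unfold phi2 phi3; exact split2 π _ _ _ _
          have hei : extMap E r = E.2 r := by simp [extMap, hr]
          have hej : extMap E j = j := by simp [extMap, hr, Ne.symm hij]
          have hek : extMap E k = k := by simp [extMap, hr, Ne.symm hik]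
          rw [hsum, hint, hei, hej, hek]
          simp [Finset.singleton_inj, hij, hik]
          ring
        · by_cases hrj : r = j
          · subst hrj
            have hint : ({i, r, k} : Finset (Fin N)) ∩ E.1 = {r} := by
              rw [hr]; exact Finset.inter_singleton_of_mem (by simp)
            have hsum : (∑ x, π x * Tfun n u i r k E x)
                = u / (n:ℝ) * phi2 π i k + (1-u) * phi3 π i (E.2 r) k := by
              calc ∑ x, π x * Tfun n u i r k E x
                  = ∑ x, π x * (u / (n:ℝ) * (if x i = x k then (1:ℝ) else 0)
                      + (1-u) * (if x i = x (E.2 r) ∧ x (E.2 r) = x k then (1:ℝ) else 0)) :=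
                    Finset.sum_congr rfl fun x _ => by rw [T_at_j u i r k hij hjk E hr x]
                _ = u / (n:ℝ) * phi2 π i k + (1-u) * phi3 π i (E.2 r) k := by
                    unfold phi2 phi3; exact split2 π _ _ _ _
            have hei : extMap E i = i := by simp [extMap, hr, hij]
            have hej : extMap E r = E.2 r := by simp [extMap, hr]
            have hek : extMap E k = k := by simp [extMap, hr, Ne.symm hjk]
            rw [hsum, hint, hei, hej, hek]
            simp [Finset.singleton_inj, Ne.symm hij, hjk]
            ring
          · by_cases hrk : r = k
            · subst hrk
              have hint : ({i, j, r} : Finset (Fin N)) ∩ E.1 = {r} := by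
                rw [hr]; exact Finset.inter_singleton_of_mem (by simp)
              have hsum : (∑ x, π x * Tfun n u i j r E x)
                  = u / (n:ℝ) * phi2 π i j + (1-u) * phi3 π i j (E.2 r) := by
                calc ∑ x, π x * Tfun n u i j r E x
                    = ∑ x, π x * (u / (n:ℝ) * (if x i = x j then (1:ℝ) else 0)
                        + (1-u) * (if x i = x j ∧ x j = x (E.2 r) then (1:ℝ) else 0)) :=
                      Finset.sum_congr rfl fun x _ => by rw [T_at_k u i j r hik hjk E hr x]
                  _ = u / (n:ℝ) * phi2 π i j + (1-u) * phi3 π i j (E.2 r) := by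
                      unfold phi2 phi3; exact split2 π _ _ _ _
              have hei : extMap E i = i := by simp [extMap, hr, hik]
              have hej : extMap E j = j := by simp [extMap, hr, hjk]
              have hek : extMap E r = E.2 r := by simp [extMap, hr]
              rw [hsum, hint, hei, hej, hek]
              simp [Finset.singleton_inj, Ne.symm hik, Ne.symm hjk]
              ring
            · have hint : ({i, j, k} : Finset (Fin N)) ∩ E.1 = ∅ := by
                rw [hr]
                apply Finset.inter_singleton_of_notMem
                simp only [Finset.mem_insert, Finset.mem_singleton]
                push_neg
                exact ⟨hri, hrj, hrk⟩
              have hsum : (∑ x, π x * Tfun n u i j k E x) = phi3 π i j k := by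
                unfold phi3
                exact Finset.sum_congr rfl fun x _ => by
                  rw [T_off hn u i j k r hri hrj hrk E hr x]
              rw [hsum, hint]
              simp [(Finset.singleton_ne_empty i).symm, (Finset.singleton_ne_empty j).symm,
                (Finset.singleton_ne_empty k).symm]
              ring
  have hR : ∀ (P : Event N → Prop) [DecidablePred P] (c : ℝ) (f : Event N → ℝ),
      c * ∑ E ∈ univ.filter P, f E = ∑ E : Event N, c * (if P E then f E else 0) := by
    intro P _ c f
    rw [Finset.sum_filter, Finset.mul_sum]
  rw [hR _ (u * (1/(n:ℝ)) * phi2 π j k) p, hR _ (u * (1/(n:ℝ)) * phi2 π i k) p,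
    hR _ (u * (1/(n:ℝ)) * phi2 π i j) p, hR _ (phi3 π i j k) p,
    hR _ (1-u) (fun E => p E * phi3 π (extMap E i) (extMap E j) (extMap E k)),
    ← Finset.sum_add_distrib, ← Finset.sum_add_distrib, ← Finset.sum_add_distrib,
    ← Finset.sum_add_distrib]
  conv_lhs => rw [hA]
  exact Finset.sum_congr rfl fun E _ => key E


end SCT
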